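/- A continuous directionally Lipschitzian function that is not locally Lipschitzian: Let n ≥ 1 and define f : ℝⁿ → ℝ by f(x) = Σᵢ₌₁ⁿ cbrt(xᵢ). Then (i) f is continuous on ℝⁿ; (ii) f is not Lipschitz continuous on any neighborhood of the origin; (iii) f is directionally Lipschitzian at x̄ = 0 with the unit vector u = (−1/√n, …, −1/√n) and constant L = 0: indeed, for every x ∈ ℝⁿ, every t > 0, and every v ∈ ℝⁿ with vᵢ < 0 for each i, one has f(x + t·v) ≤ f(x). -/

import Mathlib

open Filter Topology Metric Set

/-- The quantified directional Lipschitz estimate: `f(z + t•v) − f(z) ≤ t·L`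
whenever `‖v − u‖ < δ`, `‖z − xbar‖ < δ`, `|f z − f xbar| < δ`, and `0 < t ≤ δ`. -/
def DirLipBound {n : ℕ} (f : EuclideanSpace ℝ (Fin n) → ℝ)
    (xbar u : EuclideanSpace ℝ (Fin n)) (L δ : ℝ) : Prop :=
  ∀ (v z : EuclideanSpace ℝ (Fin n)) (t : ℝ),
    ‖v - u‖ < δ → ‖z - xbar‖ < δ → |f z - f xbar| < δ → 0 < t → t ≤ δ →
      f (z + t • v) - f z ≤ t * L

/-- `f` is directionally Lipschitzian at `xbar`. -/
def DirectionallyLipschitzAt {n : ℕ} (f : EuclideanSpace ℝ (Fin n) → ℝ)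
    (xbar : EuclideanSpace ℝ (Fin n)) : Prop :=
  ∃ u : EuclideanSpace ℝ (Fin n), ‖u‖ = 1 ∧
    ∃ (L δ : ℝ), 0 < δ ∧ DirLipBound f xbar u L δ

/-- The real (odd) cube root: the unique `y` with `y³ = x`. -/
noncomputable def cbrt (x : ℝ) : ℝ :=
  if 0 ≤ x then x ^ ((1 : ℝ) / 3) else -((-x) ^ ((1 : ℝ) / 3))

lemma cbrt_of_nonneg {x : ℝ} (h : 0 ≤ x) : cbrt x = x ^ ((1:ℝ)/3) := if_pos h

lemma cbrt_zero : cbrt 0 = 0 := by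
  simp [cbrt, Real.zero_rpow (by norm_num : (1:ℝ)/3 ≠ 0)]

lemma cbrt_continuous : Continuous cbrt := by
  have h1 : Continuous (fun x : ℝ => x ^ ((1:ℝ)/3)) :=
    Real.continuous_rpow_const (by norm_num)
  have h2 : Continuous (fun x : ℝ => -((-x) ^ ((1:ℝ)/3))) :=
    (h1.comp continuous_neg).neg
  have := Continuous.if_le h1 h2 (continuous_const : Continuous fun _ : ℝ => (0:ℝ))
    continuous_id (fun x hx => by
      have hx0 : x = 0 := hx.symm
      subst hx0
      simp [Real.zero_rpow (by norm_num : (1:ℝ)/3 ≠ 0)])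
  exact this

lemma cbrt_mono : Monotone cbrt := by
  intro a b hab
  unfold cbrt
  rcases le_or_gt 0 a with ha | ha
  · rw [if_pos ha, if_pos (ha.trans hab)]
    exact Real.rpow_le_rpow ha hab (by norm_num)
  · rw [if_neg (not_le.mpr ha)]
    rcases le_or_gt 0 b with hb | hb
    · rw [if_pos hb]
      have : (0:ℝ) ≤ b ^ ((1:ℝ)/3) := Real.rpow_nonneg hb _
      have h2 : (0:ℝ) ≤ (-a) ^ ((1:ℝ)/3) := Real.rpow_nonneg (by linarith) _
      linarith
    · rw [if_neg (not_le.mpr hb)]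
      have : (-b) ^ ((1:ℝ)/3) ≤ (-a) ^ ((1:ℝ)/3) :=
        Real.rpow_le_rpow (by linarith) (by linarith) (by norm_num)
      linarith

lemma cbrt_cube {c : ℝ} (hc : 0 ≤ c) : cbrt (c ^ 3) = c := by
  rw [cbrt_of_nonneg (by positivity)]
  rw [← Real.rpow_natCast c 3, ← Real.rpow_mul hc]
  norm_num

lemma euclid_coord_le {n : ℕ} (w : EuclideanSpace ℝ (Fin n)) (i : Fin n) :
    |w i| ≤ ‖w‖ := by
  rw [EuclideanSpace.norm_eq]
  have h1 : ‖w i‖ ^ 2 ≤ ∑ j, ‖w j‖ ^ 2 :=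
    Finset.single_le_sum (f := fun j => ‖w j‖ ^ 2) (fun j _ => by positivity)
      (Finset.mem_univ i)
  calc |w i| = Real.sqrt (‖w i‖ ^ 2) := by
        rw [Real.sqrt_sq (norm_nonneg _)]; rfl
    _ ≤ _ := Real.sqrt_le_sqrt h1

theorem cbrt_sum_directionallyLipschitz {n : ℕ} (hn : 1 ≤ n)
    (f : EuclideanSpace ℝ (Fin n) → ℝ)
    (hf : ∀ x, f x = ∑ i, cbrt (x i))
    (u : EuclideanSpace ℝ (Fin n)) (hu : ∀ i, u i = -(1 / Real.sqrt n)) :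
    Continuous f ∧
    (¬ ∃ (K r : ℝ), 0 < r ∧
      ∀ x ∈ ball (0 : EuclideanSpace ℝ (Fin n)) r,
        ∀ y ∈ ball (0 : EuclideanSpace ℝ (Fin n)) r,
          |f x - f y| ≤ K * ‖x - y‖) ∧
    ‖u‖ = 1 ∧
    (∀ (x v : EuclideanSpace ℝ (Fin n)) (t : ℝ),
      0 < t → (∀ i, v i < 0) → f (x + t • v) ≤ f x) ∧
    (∃ δ : ℝ, 0 < δ ∧ DirLipBound f 0 u 0 δ) := by
  have hf' : f = fun x => ∑ i, cbrt (x i) := funext hf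
  have hnR : (0:ℝ) < (n:ℝ) := by exact_mod_cast hn
  have hsn : (0:ℝ) < Real.sqrt n := Real.sqrt_pos.mpr hnR
  -- the monotonicity part (iv)
  have hmono : ∀ (x v : EuclideanSpace ℝ (Fin n)) (t : ℝ),
      0 < t → (∀ i, v i < 0) → f (x + t • v) ≤ f x := by
    intro x v t ht hv
    rw [hf']
    apply Finset.sum_le_sum
    intro i _
    have : (x + t • v) i = x i + t * v i := by
      simp [PiLp.add_apply, PiLp.smul_apply, smul_eq_mul]
    rw [this]
    exact cbrt_mono (by nlinarith [hv i])
  refine ⟨?_, ?_, ?_, hmono, ?_⟩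
  · -- continuity
    rw [hf']
    exact continuous_finset_sum _ fun i _ =>
      cbrt_continuous.comp ((continuous_apply i).comp (PiLp.continuous_ofLp 2 _))
  · -- not Lipschitz near 0
    rintro ⟨K, r, hr, hK⟩
    set c : ℝ := min (min r 1 / 2) (1 / (2 * (|K| + 1))) with hc
    have hc0 : 0 < c := by
      apply lt_min
      · have := lt_min hr one_pos; linarith [lt_min hr one_pos]
      · positivity
    have hc1 : c ≤ 1 := by
      have : c ≤ min r 1 / 2 := min_le_left _ _
      have h1 : min r 1 ≤ 1 := min_le_right _ _
      linarith
    have hcr : c < r := by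
      have : c ≤ min r 1 / 2 := min_le_left _ _
      have h1 : min r 1 ≤ r := min_le_left _ _
      have h2 : 0 < min r 1 := lt_min hr one_pos
      linarith
    have hcK : |K| * c ^ 2 < 1 := by
      have h1 : c ≤ 1 / (2 * (|K| + 1)) := min_le_right _ _
      have h2 : c ^ 2 ≤ c := by nlinarith
      have : |K| * c ≤ |K| * (1 / (2 * (|K| + 1))) :=
        mul_le_mul_of_nonneg_left h1 (abs_nonneg K)
      have h3 : |K| * (1 / (2 * (|K| + 1))) < 1 := by
        rw [mul_one_div, div_lt_one (by positivity)]
        linarith [abs_nonneg K]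
      nlinarith [abs_nonneg K, sq_nonneg c]
    set i0 : Fin n := ⟨0, hn⟩
    set x : EuclideanSpace ℝ (Fin n) := EuclideanSpace.single i0 (c ^ 3) with hx
    have hfx : f x = c := by
      rw [hf x]
      rw [Finset.sum_eq_single i0]
      · rw [hx, EuclideanSpace.single_apply, if_pos rfl]
        exact cbrt_cube hc0.le
      · intro j _ hj
        rw [hx, EuclideanSpace.single_apply, if_neg hj, cbrt_zero]
      · intro h; exact absurd (Finset.mem_univ i0) h
    have hx0 : x ∈ ball (0 : EuclideanSpace ℝ (Fin n)) r := by
      rw [mem_ball, dist_zero_right, hx, EuclideanSpace.norm_single,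
        Real.norm_eq_abs, abs_of_nonneg (by positivity)]
      nlinarith
    have h00 : (0 : EuclideanSpace ℝ (Fin n)) ∈ ball (0 : EuclideanSpace ℝ (Fin n)) r :=
      mem_ball_self hr
    have hf0 : f 0 = 0 := by
      rw [hf]
      apply Finset.sum_eq_zero
      intro i _
      have h0i : (0 : EuclideanSpace ℝ (Fin n)) i = 0 := rfl
      rw [h0i, cbrt_zero]
    have hkey := hK x hx0 0 h00
    rw [hfx, hf0, sub_zero, sub_zero, hx, EuclideanSpace.norm_single,
      Real.norm_eq_abs, abs_of_nonneg hc0.le,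
      abs_of_nonneg (by positivity : (0:ℝ) ≤ c ^ 3)] at hkey
    have hKle : K * c ^ 3 ≤ |K| * c ^ 3 :=
      mul_le_mul_of_nonneg_right (le_abs_self K) (by positivity)
    nlinarith
  · -- norm u = 1
    rw [EuclideanSpace.norm_eq]
    have : ∀ i : Fin n, ‖u i‖ ^ 2 = 1 / (n:ℝ) := by
      intro i
      rw [hu i]
      rw [Real.norm_eq_abs, abs_neg, abs_of_nonneg (by positivity)]
      rw [div_pow, one_pow, Real.sq_sqrt hnR.le]
    rw [Finset.sum_congr rfl fun i _ => this i]
    rw [Finset.sum_const, Finset.card_univ, Fintype.card_fin, nsmul_eq_mul]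
    rw [mul_one_div, div_self (ne_of_gt hnR), Real.sqrt_one]
  · -- DirLipBound with δ = 1/√n
    refine ⟨1 / Real.sqrt n, by positivity, ?_⟩
    intro v z t hv hz hfz ht htd
    have hvneg : ∀ i, v i < 0 := by
      intro i
      have h1 : |(v - u) i| ≤ ‖v - u‖ := euclid_coord_le _ i
      have h2 : (v - u) i = v i - u i := by simp [PiLp.sub_apply]
      rw [h2, hu i] at h1
      have := abs_lt.mp (lt_of_le_of_lt h1 hv)
      linarith [this.2]
    have := hmono z v t ht hvneg
    linarith [mul_nonneg ht.le (le_refl (0:ℝ))]
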